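/- Let G be a finite simple graph with no isolated vertex and S an independent set of G. Then the Hilbert series of R'/I(G^S) satisfies H_{R'/I(G^S)}(λ) = H_{R/I(G)}(λ) + λ/(1-λ)^{|S|+1}, where R = K[x_1,...,x_n], R' = K[x_1,...,x_{n+1}], and G^S is the S-suspension. -/

import Mathlib

open MvPolynomial PowerSeries

/-- A matching of a simple graph: a set of pairwise disjoint edges. -/
def IsMatchingSet {V : Type*} (G : SimpleGraph V) (M : Finset (Sym2 V)) : Prop :=
  (↑M : Set (Sym2 V)) ⊆ G.edgeSet ∧
    ∀ e ∈ M, ∀ f ∈ M, e ≠ f → ∀ v, v ∈ e → v ∉ f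

/-- An induced matching: a matching such that no edge of `G` meets two distinct
edges of the matching. -/
def IsInducedMatchingSet {V : Type*} (G : SimpleGraph V) (M : Finset (Sym2 V)) : Prop :=
  IsMatchingSet G M ∧
    ∀ e ∈ G.edgeSet, ∀ f ∈ M, ∀ g ∈ M, f ≠ g →
      ¬((∃ v, v ∈ e ∧ v ∈ f) ∧ (∃ w, w ∈ e ∧ w ∈ g))

/-- The matching number `m(G)`. -/
noncomputable def matchNum {V : Type*} (G : SimpleGraph V) : ℕ :=
  sSup {k | ∃ M : Finset (Sym2 V), IsMatchingSet G M ∧ M.card = k}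

/-- The induced matching number `im(G)`. -/
noncomputable def indMatchNum {V : Type*} (G : SimpleGraph V) : ℕ :=
  sSup {k | ∃ M : Finset (Sym2 V), IsInducedMatchingSet G M ∧ M.card = k}

/-- The `S`-suspension `G^S`: add a new vertex (`none`) joined to every vertex not in `S`. -/
def sSusp {V : Type*} (G : SimpleGraph V) (S : Set V) : SimpleGraph (Option V) :=
  SimpleGraph.fromRel (fun a b =>
    (∃ x y, a = some x ∧ b = some y ∧ G.Adj x y) ∨
    (a = none ∧ ∃ y, b = some y ∧ y ∉ S))

/-- The `{x_i,x_j}, S`-suspension: add a new vertex (`none`) joined to every vertex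
outside `S ∪ {i, j}`. -/
def eSusp {V : Type*} (G : SimpleGraph V) (i j : V) (S : Set V) : SimpleGraph (Option V) :=
  SimpleGraph.fromRel (fun a b =>
    (∃ x y, a = some x ∧ b = some y ∧ G.Adj x y) ∨
    (a = none ∧ ∃ y, b = some y ∧ y ∉ S ∧ y ≠ i ∧ y ≠ j))

/-- The edge ideal of a graph. -/
noncomputable def edgeIdeal (K : Type*) [Field K] {σ : Type*} (G : SimpleGraph σ) :
    Ideal (MvPolynomial σ K) :=
  Ideal.span {p | ∃ i j, G.Adj i j ∧ p = X i * X j}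

/-- The Hilbert function of `R/I` (standard grading). -/
noncomputable def hilbFun (K : Type*) [Field K] {σ : Type*}
    (I : Ideal (MvPolynomial σ K)) (n : ℕ) : ℕ :=
  Module.finrank K ((homogeneousSubmodule σ K n).map
    (Ideal.Quotient.mkₐ K I).toLinearMap)

/-- The Hilbert series of `R/I`, as a power series over `ℚ`. -/
noncomputable def hilbSeries (K : Type*) [Field K] {σ : Type*}
    (I : Ideal (MvPolynomial σ K)) : PowerSeries ℚ :=
  PowerSeries.mk fun n => (hilbFun K I n : ℚ)

/-- `HilbEq K I d h` says that the Hilbert series of `R/I` equals `h(λ)/(1-λ)^d`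
with `h(1) ≠ 0`, i.e. `h` is the `h`-polynomial and `d = dim R/I`. -/
def HilbEq (K : Type*) [Field K] {σ : Type*} (I : Ideal (MvPolynomial σ K))
    (d : ℕ) (h : Polynomial ℤ) : Prop :=
  hilbSeries K I * (1 - PowerSeries.X) ^ d =
    ((h.map (Int.castRingHom ℚ) : Polynomial ℚ) : PowerSeries ℚ) ∧ h.eval 1 ≠ 0

/-- `regBound K I r` : there is a finite graded free resolution of `R/I` all of whose
generator degrees in homological degree `i` are at most `i + r`.  The minimal free
resolution realizes `r = reg(R/I)`, and the generator degrees of any graded free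
resolution contain those of the minimal one, hence
`reg(R/I) = sInf {r | regBound K I r}`. -/
noncomputable def regBound (K : Type*) [Field K] {σ : Type*}
    (I : Ideal (MvPolynomial σ K)) (r : ℕ) : Prop :=
  ∃ (L : ℕ) (k : ℕ → ℕ) (d : (i : ℕ) → Fin (k i) → ℕ)
    (φ : (i : ℕ) → ((Fin (k (i + 1)) →₀ MvPolynomial σ K) →ₗ[MvPolynomial σ K]
      (Fin (k i) →₀ MvPolynomial σ K)))
    (ε : (Fin (k 0) →₀ MvPolynomial σ K) →ₗ[MvPolynomial σ K] (MvPolynomial σ K ⧸ I)),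
    (∀ i, L ≤ i → k i = 0) ∧
    (∀ (i : ℕ) (b : Fin (k (i + 1))) (a : Fin (k i)),
      (φ i (Finsupp.single b 1)) a ∈ homogeneousSubmodule σ K (d (i + 1) b - d i a) ∧
      (d (i + 1) b < d i a → (φ i (Finsupp.single b 1)) a = 0)) ∧
    (∀ a : Fin (k 0), ε (Finsupp.single a 1) ∈
      (homogeneousSubmodule σ K (d 0 a)).map (Ideal.Quotient.mkₐ K I).toLinearMap) ∧
    Function.Surjective ε ∧
    LinearMap.range (φ 0) = LinearMap.ker ε ∧
    (∀ i : ℕ, LinearMap.range (φ (i + 1)) = LinearMap.ker (φ i)) ∧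
    (∀ (i : ℕ) (a : Fin (k i)), d i a ≤ i + r)

/-- The Castelnuovo–Mumford regularity of `R/I`. -/
noncomputable def reg (K : Type*) [Field K] {σ : Type*}
    (I : Ideal (MvPolynomial σ K)) : ℕ :=
  sInf {r | regBound K I r}

namespace Stmt8

variable {K : Type*} [Field K] {σ : Type*}

def Indep (H : SimpleGraph σ) (m : σ →₀ ℕ) : Prop :=
  ∀ i ∈ m.support, ∀ j ∈ m.support, ¬ H.Adj i j

lemma edgeIdeal_eq (H : SimpleGraph σ) :
    edgeIdeal K H = Ideal.span ((fun s => MvPolynomial.monomial s (1 : K)) ''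
      {e | ∃ i j, H.Adj i j ∧ e = Finsupp.single i 1 + Finsupp.single j 1}) := by
  unfold edgeIdeal
  congr 1
  ext p
  constructor
  · rintro ⟨i, j, hij, rfl⟩
    exact ⟨_, ⟨i, j, hij, rfl⟩, by simp [MvPolynomial.X, monomial_mul]⟩
  · rintro ⟨e, ⟨i, j, hij, rfl⟩, rfl⟩
    exact ⟨i, j, hij, by simp [MvPolynomial.X, monomial_mul]⟩

lemma mem_edgeIdeal_iff (H : SimpleGraph σ) (p : MvPolynomial σ K) :
    p ∈ edgeIdeal K H ↔ ∀ m ∈ p.support, ¬ Indep H m := by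
  rw [edgeIdeal_eq, mem_ideal_span_monomial_image]
  refine forall₂_congr fun m hm => ?_
  constructor
  · rintro ⟨e, ⟨i, j, hij, rfl⟩, hle⟩ hind
    refine hind i ?_ j ?_ hij <;> rw [Finsupp.mem_support_iff]
    · have h := hle i
      have : (1 : ℕ) ≤ m i := le_trans (by simp [Finsupp.single_apply]) h
      omega
    · have h := hle j
      have : (1 : ℕ) ≤ m j := le_trans (by simp [Finsupp.single_apply]) h
      omega
  · intro hind
    unfold Indep at hind
    push_neg at hind
    obtain ⟨i, hi, j, hj, hij⟩ := hind
    refine ⟨_, ⟨i, j, hij, rfl⟩, ?_⟩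
    intro a
    rw [Finsupp.mem_support_iff] at hi hj
    have hne : i ≠ j := hij.ne
    rcases eq_or_ne a i with rfl | hai
    · simp [Finsupp.single_apply, hne.symm]; omega
    · rcases eq_or_ne a j with rfl | haj
      · simp [Finsupp.single_apply, hai.symm]  -- careful
        omega
      · simp [Finsupp.single_apply, Ne.symm hai, Ne.symm haj]

lemma monomial_mem_edgeIdeal_iff (H : SimpleGraph σ) (m : σ →₀ ℕ) :
    monomial m (1 : K) ∈ edgeIdeal K H ↔ ¬ Indep H m := by
  classical
  rw [mem_edgeIdeal_iff]
  rw [support_monomial, if_neg (one_ne_zero)]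
  simp




lemma finite_degree_indep [Finite σ] (H : SimpleGraph σ) (d : ℕ) :
    {m : σ →₀ ℕ | m.degree = d ∧ Indep H m}.Finite :=
  (Finsupp.finite_of_degree_le d).subset (fun _ hm => le_of_eq hm.1)

instance fin_sub [Finite σ] (H : SimpleGraph σ) (d : ℕ) :
    Finite {m : σ →₀ ℕ // m.degree = d ∧ Indep H m} :=
  (finite_degree_indep H d).to_subtype

lemma hilbFun_eq_card [Finite σ] (H : SimpleGraph σ) (d : ℕ) :
    hilbFun K (edgeIdeal K H) d
      = Nat.card {m : σ →₀ ℕ // m.degree = d ∧ Indep H m} := by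
  classical
  set I := edgeIdeal K H with hI
  set v : {m : σ →₀ ℕ // m.degree = d ∧ Indep H m} → (MvPolynomial σ K ⧸ I) :=
    fun m => Ideal.Quotient.mkₐ K I (monomial m.1 (1 : K)) with hv
  have hli : LinearIndependent K v := by
    rw [linearIndependent_iff']
    intro s g hsum i hi
    by_contra hgi
    set p : MvPolynomial σ K := ∑ j ∈ s, monomial (j : σ →₀ ℕ) (g j) with hp
    have hmk : Ideal.Quotient.mkₐ K I p = 0 := by
      rw [hp, map_sum]
      rw [← hsum]
      refine Finset.sum_congr rfl fun j _ => ?_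
      have : monomial (j : σ →₀ ℕ) (g j) = g j • monomial (j : σ →₀ ℕ) (1 : K) := by
        rw [smul_monomial, smul_eq_mul, mul_one]
      rw [this, map_smul, hv]
    have hpI : p ∈ I := by
      rw [Ideal.Quotient.mkₐ_eq_mk] at hmk
      exact (Ideal.Quotient.eq_zero_iff_mem).1 hmk
    have hcoeff : coeff (i : σ →₀ ℕ) p = g i := by
      rw [hp, coeff_sum]
      rw [Finset.sum_eq_single i]
      · simp [MvPolynomial.coeff_monomial]
      · intro j hj hji
        rw [MvPolynomial.coeff_monomial, if_neg (fun h => hji (Subtype.ext h))]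
      · intro h; exact absurd hi h
    have hsupp : (i : σ →₀ ℕ) ∈ p.support := by
      rw [mem_support_iff, hcoeff]; exact hgi
    exact (mem_edgeIdeal_iff H p).1 hpI _ hsupp i.2.2
  have hspan : (homogeneousSubmodule σ K d).map (Ideal.Quotient.mkₐ K I).toLinearMap
      = Submodule.span K (Set.range v) := by
    apply le_antisymm
    · rintro x ⟨p, hp, rfl⟩
      have hp' : p.IsHomogeneous d := hp
      have hrepr : (Ideal.Quotient.mkₐ K I).toLinearMap p
          = ∑ m ∈ p.support, Ideal.Quotient.mkₐ K I (monomial m (coeff m p)) := by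
        conv_lhs => rw [← support_sum_monomial_coeff p]
        rw [map_sum]
        rfl
      rw [hrepr]
      refine Submodule.sum_mem _ fun m hm => ?_
      by_cases hind : Indep H m
      · have hdeg : m.degree = d := by
          have := hp' (mem_support_iff.1 hm)
          exact (DFunLike.congr_fun Finsupp.degree_eq_weight_one m).trans this
        have : monomial m (coeff m p) = coeff m p • monomial m (1 : K) := by
          rw [smul_monomial, smul_eq_mul, mul_one]
        rw [this, map_smul]
        exact Submodule.smul_mem _ _ (Submodule.subset_span ⟨⟨m, hdeg, hind⟩, rfl⟩)
      · have : monomial m (coeff m p) = MvPolynomial.C (coeff m p) * monomial m (1 : K) := by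
          rw [C_mul_monomial, mul_one]
        have hmem : monomial m (coeff m p) ∈ I := by
          rw [this]; exact Ideal.mul_mem_left _ _ ((monomial_mem_edgeIdeal_iff H m).2 hind)
        rw [Ideal.Quotient.mkₐ_eq_mk, Ideal.Quotient.eq_zero_iff_mem.2 hmem]
        exact Submodule.zero_mem _
    · rw [Submodule.span_le]
      rintro x ⟨m, rfl⟩
      exact ⟨monomial m.1 1, (mem_homogeneousSubmodule _ _).2
        (isHomogeneous_monomial 1 m.2.1), rfl⟩
  have : Fintype {m : σ →₀ ℕ // m.degree = d ∧ Indep H m} := Fintype.ofFinite _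
  rw [hilbFun, hspan, finrank_span_eq_card hli, Nat.card_eq_fintype_card]



lemma degree_single (a : σ) (b : ℕ) : (Finsupp.single a b).degree = b := by
  rcases eq_or_ne b 0 with rfl | h
  · simp [Finsupp.degree]
  · rw [Finsupp.degree_apply, Finsupp.support_single_ne_zero _ h, Finset.sum_singleton,
      Finsupp.single_eq_same]

lemma degree_add (a b : σ →₀ ℕ) : (a + b).degree = a.degree + b.degree := by
  simp only [Finsupp.degree_eq_weight_one, map_add]

lemma degree_embDomain {τ : Type*} (f : τ ↪ σ) (v : τ →₀ ℕ) :
    (Finsupp.embDomain f v).degree = v.degree := by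
  rw [Finsupp.degree_apply, Finsupp.degree_apply, Finsupp.support_embDomain, Finset.sum_map]
  exact Finset.sum_congr rfl fun a _ => Finsupp.embDomain_apply_self f v a

lemma card_degree (τ : Type*) [Fintype τ] [DecidableEq τ] (e : ℕ) :
    Nat.card {q : τ →₀ ℕ // q.degree = e} = (Fintype.card τ + e - 1).choose e := by
  have hdeg : ∀ q : τ →₀ ℕ, Multiset.card (Finsupp.toMultiset q) = q.degree := by
    intro q
    rw [Finsupp.card_toMultiset]
    rfl
  have E : {q : τ →₀ ℕ // q.degree = e} ≃ Sym τ e :=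
    { toFun := fun q => ⟨Finsupp.toMultiset q.1, by rw [hdeg]; exact q.2⟩
      invFun := fun s => ⟨Multiset.toFinsupp s.1, by
        rw [← hdeg, Multiset.toFinsupp_toMultiset]; exact s.2⟩
      left_inv := fun q => Subtype.ext (Finsupp.toMultiset_toFinsupp q.1)
      right_inv := fun s => Subtype.ext (Multiset.toFinsupp_toMultiset s.1) }
  rw [Nat.card_congr E, Nat.card_eq_fintype_card, Sym.card_sym_eq_choose]

-- adjacency lemmas
section Adj
variable {V : Type*} {G : SimpleGraph V} {S : Set V}

lemma sSusp_adj_some {x y : V} : (sSusp G S).Adj (some x) (some y) ↔ G.Adj x y := by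
  rw [sSusp, SimpleGraph.fromRel_adj]
  constructor
  · rintro ⟨hne, (⟨a, b, ha, hb, hab⟩ | ⟨hn, -⟩) | (⟨a, b, ha, hb, hab⟩ | ⟨hn, -⟩)⟩
    · cases ha; cases hb; exact hab
    · exact absurd hn (by simp)
    · cases ha; cases hb; exact hab.symm
    · exact absurd hn (by simp)
  · intro h
    exact ⟨by simpa using h.ne, Or.inl (Or.inl ⟨x, y, rfl, rfl, h⟩)⟩

lemma sSusp_adj_none {y : V} : (sSusp G S).Adj none (some y) ↔ y ∉ S := by
  rw [sSusp, SimpleGraph.fromRel_adj]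
  constructor
  · rintro ⟨hne, (⟨a, b, ha, hb, hab⟩ | ⟨-, z, hz, hzS⟩) | (⟨a, b, ha, hb, hab⟩ | ⟨hn, -⟩)⟩
    · exact absurd ha (by simp)
    · cases hz; exact hzS
    · exact absurd hb (by simp)
    · exact absurd hn (by simp)
  · intro h
    exact ⟨by simp, Or.inl (Or.inr ⟨rfl, y, rfl, h⟩)⟩

end Adj

section Count
variable {n : ℕ} (G : SimpleGraph (Fin n)) (S : Finset (Fin n))

/-- The allowed support for monomials containing the new vertex. -/
def TT (S : Finset (Fin n)) : Finset (Option (Fin n)) := insert none (S.image some)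

lemma card_TT : (TT S).card = S.card + 1 := by
  rw [TT, Finset.card_insert_of_notMem (by simp),
    Finset.card_image_of_injective _ (Option.some_injective _)]

lemma indep_of_subset_TT (hS : ∀ x ∈ S, ∀ y ∈ S, ¬ G.Adj x y) (x : Option (Fin n) →₀ ℕ)
    (hx : ∀ a ∈ x.support, a ∈ TT S) : Indep (sSusp G (↑S : Set (Fin n))) x := by
  intro i hi j hj hadj
  have hiT := hx i hi
  have hjT := hx j hj
  rw [TT, Finset.mem_insert] at hiT hjT
  rcases hiT with rfl | hi'
  · rcases hjT with rfl | hj'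
    · exact (sSusp G (↑S : Set (Fin n))).irrefl hadj
    · obtain ⟨y, hyS, rfl⟩ := Finset.mem_image.1 hj'
      exact (sSusp_adj_none.1 hadj) (by simpa using hyS)
  · obtain ⟨y, hyS, rfl⟩ := Finset.mem_image.1 hi'
    rcases hjT with rfl | hj'
    · exact (sSusp_adj_none.1 hadj.symm) (by simpa using hyS)
    · obtain ⟨z, hzS, rfl⟩ := Finset.mem_image.1 hj'
      exact hS y hyS z hzS (sSusp_adj_some.1 hadj)

lemma subset_TT_of_indep (x : Option (Fin n) →₀ ℕ) (hnone : x none ≠ 0)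
    (hind : Indep (sSusp G (↑S : Set (Fin n))) x) : ∀ a ∈ x.support, a ∈ TT S := by
  intro a ha
  match a with
  | none => exact Finset.mem_insert_self _ _
  | some y =>
    have hnmem : none ∈ x.support := Finsupp.mem_support_iff.2 hnone
    have := hind none hnmem (some y) ha
    rw [sSusp_adj_none] at this
    push_neg at this
    exact Finset.mem_insert_of_mem (Finset.mem_image.2 ⟨y, by simpa using this, rfl⟩)

noncomputable def E1 (d : ℕ) :
    {m : Option (Fin n) →₀ ℕ //
        (m.degree = d ∧ Indep (sSusp G (↑S : Set (Fin n))) m) ∧ m none = 0}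
      ≃ {m : Fin n →₀ ℕ // m.degree = d ∧ Indep G m} where
  toFun x := ⟨x.1.some, by
    obtain ⟨⟨hdeg, hind⟩, hnone⟩ := x.2
    have hemb : Finsupp.embDomain (Function.Embedding.some) x.1.some = x.1 := by
      ext a
      match a with
      | none =>
        rw [Finsupp.embDomain_notin_range _ _ _ (by simp), hnone]
      | some a => exact Finsupp.embDomain_apply_self _ _ a
    constructor
    · have hdd := degree_embDomain (Function.Embedding.some) x.1.some
      rw [hemb] at hdd
      rw [← hdd]; exact hdeg
    · intro i hi j hj hadj
      rw [Finsupp.mem_support_iff, Finsupp.some_apply, ← Finsupp.mem_support_iff] at hi hj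
      exact hind _ hi _ hj (sSusp_adj_some.2 hadj)⟩
  invFun m := ⟨Finsupp.embDomain (Function.Embedding.some) m.1, by
    refine ⟨⟨by rw [degree_embDomain]; exact m.2.1, ?_⟩, ?_⟩
    · intro i hi j hj hadj
      rw [Finsupp.support_embDomain, Finset.mem_map] at hi hj
      obtain ⟨a, ha, rfl⟩ := hi
      obtain ⟨b, hb, rfl⟩ := hj
      exact m.2.2 a ha b hb (sSusp_adj_some.1 hadj)
    · exact Finsupp.embDomain_notin_range _ _ _ (by simp)⟩
  left_inv x := by
    apply Subtype.ext
    ext a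
    match a with
    | none =>
      rw [Finsupp.embDomain_notin_range _ _ _ (by simp), x.2.2]
    | some a => exact Finsupp.embDomain_apply_self _ _ a
  right_inv m := by
    apply Subtype.ext
    ext a
    exact Finsupp.embDomain_apply_self _ _ a

noncomputable def E2 (hS : ∀ x ∈ S, ∀ y ∈ S, ¬ G.Adj x y) (d : ℕ) :
    {m : Option (Fin n) →₀ ℕ //
        (m.degree = d ∧ Indep (sSusp G (↑S : Set (Fin n))) m) ∧ m none ≠ 0}
      ≃ {q : Option (Fin n) →₀ ℕ // q.degree + 1 = d ∧ ∀ a ∈ q.support, a ∈ TT S} where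
  toFun x := by
    refine ⟨x.1 - Finsupp.single none 1, ?_, ?_⟩
    · have hx : (x.1 - Finsupp.single none 1) + Finsupp.single none 1 = x.1 := by
        ext a
        simp only [Finsupp.add_apply, Finsupp.tsub_apply]
        have := x.2.2
        rcases eq_or_ne a none with rfl | ha
        · simp only [Finsupp.single_eq_same]
          omega
        · rw [Finsupp.single_eq_of_ne' (Ne.symm ha)]; simp
      have := congrArg Finsupp.degree hx
      rw [degree_add, degree_single] at this
      rw [this, x.2.1.1]
    · intro a ha
      refine subset_TT_of_indep G S x.1 x.2.2 x.2.1.2 a ?_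
      rw [Finsupp.mem_support_iff] at ha ⊢
      intro h
      apply ha
      rw [Finsupp.tsub_apply, h]
      simp
  invFun q := by
    refine ⟨q.1 + Finsupp.single none 1, ⟨?_, ?_⟩, ?_⟩
    · rw [degree_add, degree_single, q.2.1]
    · refine indep_of_subset_TT G S hS _ fun a ha => ?_
      rcases Finset.mem_union.1 (Finsupp.support_add ha) with h | h
      · exact q.2.2 a h
      · have : a = none := by
          by_contra hne
          rw [Finsupp.mem_support_iff, Finsupp.single_eq_of_ne' (Ne.symm hne)] at h
          exact h rfl
        rw [this]
        exact Finset.mem_insert_self _ _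
    · simp
  left_inv x := by
    apply Subtype.ext
    ext a
    simp only [Finsupp.add_apply, Finsupp.tsub_apply]
    rcases eq_or_ne a none with rfl | ha
    · simp only [Finsupp.single_eq_same]
      have := x.2.2
      omega
    · rw [Finsupp.single_eq_of_ne' (Ne.symm ha)]; simp
  right_inv q := by
    apply Subtype.ext
    ext a
    simp only [Finsupp.add_apply, Finsupp.tsub_apply]
    omega

noncomputable def E3 (d : ℕ) :
    {q : Option (Fin n) →₀ ℕ // q.degree + 1 = d ∧ ∀ a ∈ q.support, a ∈ TT S}
      ≃ {r : {a : Option (Fin n) // a ∈ TT S} →₀ ℕ // r.degree + 1 = d} where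
  toFun q := ⟨Finsupp.subtypeDomain (· ∈ TT S) q.1, by
    have hext : (Finsupp.subtypeDomain (· ∈ TT S) q.1).extendDomain = q.1 :=
      Finsupp.extendDomain_subtypeDomain _ q.2.2
    have hdeg : (Finsupp.subtypeDomain (· ∈ TT S) q.1).degree = q.1.degree := by
      conv_rhs => rw [← hext]
      rw [Finsupp.extendDomain_eq_embDomain_subtype, degree_embDomain]
    rw [hdeg]; exact q.2.1⟩
  invFun r := ⟨r.1.extendDomain, by
    rw [Finsupp.extendDomain_eq_embDomain_subtype, degree_embDomain]
    exact r.2, fun a ha => Finsupp.support_extendDomain_subset _ ha⟩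
  left_inv q := Subtype.ext (Finsupp.extendDomain_subtypeDomain _ q.2.2)
  right_inv r := Subtype.ext (Finsupp.subtypeDomain_extendDomain _)


def cval (s : ℕ) : ℕ → ℕ
  | 0 => 0
  | e + 1 => (s + e).choose e

lemma card_TT_deg (d : ℕ) :
    Nat.card {r : {a : Option (Fin n) // a ∈ TT S} →₀ ℕ // r.degree + 1 = d}
      = cval S.card d := by
  match d with
  | 0 =>
    haveI : IsEmpty {r : {a : Option (Fin n) // a ∈ TT S} →₀ ℕ // r.degree + 1 = 0} :=
      ⟨fun r => by omega⟩
    simp [Nat.card_of_isEmpty, cval]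
  | e + 1 =>
    have E : {r : {a : Option (Fin n) // a ∈ TT S} →₀ ℕ // r.degree + 1 = e + 1}
        ≃ {r : {a : Option (Fin n) // a ∈ TT S} →₀ ℕ // r.degree = e} :=
      Equiv.subtypeEquivRight (fun r => by omega)
    rw [Nat.card_congr E, card_degree, Fintype.card_coe, card_TT, cval]
    congr 1
    omega

lemma count_main (hS : ∀ x ∈ S, ∀ y ∈ S, ¬ G.Adj x y) (d : ℕ) :
    Nat.card {m : Option (Fin n) →₀ ℕ // m.degree = d ∧ Indep (sSusp G (↑S : Set (Fin n))) m}
      = Nat.card {m : Fin n →₀ ℕ // m.degree = d ∧ Indep G m}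
        + cval S.card d := by
  classical
  set P : (Option (Fin n) →₀ ℕ) → Prop :=
    fun m => m.degree = d ∧ Indep (sSusp G (↑S : Set (Fin n))) m with hP
  set Q : (Option (Fin n) →₀ ℕ) → Prop := fun m => m none = 0 with hQ
  haveI hfin : Finite {m : Option (Fin n) →₀ ℕ // P m} :=
    Set.Finite.to_subtype ((Finsupp.finite_of_degree_le d).subset (fun _ hm => le_of_eq hm.1))
  have h1 : Nat.card {m : Option (Fin n) →₀ ℕ // P m}
      = Nat.card {x : {m : Option (Fin n) →₀ ℕ // P m} // Q x.1}
        + Nat.card {x : {m : Option (Fin n) →₀ ℕ // P m} // ¬ Q x.1} := by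
    rw [← Nat.card_sum]
    exact Nat.card_congr (Equiv.sumCompl (fun x : {m : Option (Fin n) →₀ ℕ // P m} => Q x.1)).symm
  have h2 : Nat.card {x : {m : Option (Fin n) →₀ ℕ // P m} // Q x.1}
      = Nat.card {m : Fin n →₀ ℕ // m.degree = d ∧ Indep G m} :=
    Nat.card_congr ((Equiv.subtypeSubtypeEquivSubtypeInter P Q).trans (E1 G S d))
  have h3 : Nat.card {x : {m : Option (Fin n) →₀ ℕ // P m} // ¬ Q x.1}
      = cval S.card d := by
    rw [Nat.card_congr ((Equiv.subtypeSubtypeEquivSubtypeInter P (fun m => ¬ Q m)).trans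
      ((E2 G S hS d).trans (E3 S d))), card_TT_deg]
  rw [h1, h2, h3]

end Count


end Stmt8

/-- Hilbert series of the `S`-suspension:
`H_{R'/I(G^S)}(λ) = H_{R/I(G)}(λ) + λ/(1-λ)^{|S|+1}`. -/
theorem stmt_8 (K : Type*) [Field K] {n : ℕ} (G : SimpleGraph (Fin n))
    (hiso : ∀ v : Fin n, ∃ w, G.Adj v w) (S : Finset (Fin n))
    (hS : ∀ x ∈ S, ∀ y ∈ S, ¬ G.Adj x y) :
    hilbSeries K (edgeIdeal K (sSusp G (↑S : Set (Fin n)))) =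
      hilbSeries K (edgeIdeal K G) +
        PowerSeries.X * ((1 - PowerSeries.X) ^ (S.card + 1))⁻¹ := by
  classical
  have hinv : ((1 - PowerSeries.X : PowerSeries ℚ) ^ (S.card + 1))⁻¹
      = ((PowerSeries.invOneSubPow ℚ (S.card + 1) : (PowerSeries ℚ)ˣ) : PowerSeries ℚ) := by
    symm
    rw [PowerSeries.eq_inv_iff_mul_eq_one]
    · have := (PowerSeries.invOneSubPow ℚ (S.card + 1)).val_inv
      rwa [PowerSeries.invOneSubPow_inv_eq_one_sub_pow ℚ (S.card + 1)] at this
    · rw [map_pow, map_sub, map_one, PowerSeries.constantCoeff_X, sub_zero, one_pow]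
      exact one_ne_zero
  apply PowerSeries.ext
  intro d
  rw [hinv, map_add, hilbSeries, hilbSeries, PowerSeries.coeff_mk, PowerSeries.coeff_mk,
    Stmt8.hilbFun_eq_card, Stmt8.hilbFun_eq_card, Stmt8.count_main G S hS d]
  push_cast
  congr 1
  match d with
  | 0 =>
    rw [PowerSeries.coeff_zero_eq_constantCoeff, map_mul, PowerSeries.constantCoeff_X, zero_mul]
    simp [Stmt8.cval]
  | e + 1 =>
    rw [PowerSeries.coeff_succ_X_mul, PowerSeries.invOneSubPow_val_succ_eq_mk_add_choose,
      PowerSeries.coeff_mk]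
    have : Stmt8.cval S.card (e + 1) = (S.card + e).choose e := rfl
    rw [this, ← Nat.choose_symm_add]
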